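/- The inverse operator D̂^{−1} is Hilbert–Schmidt, with Hilbert–Schmidt norm squared equal to 1/((1 − p^{−1})(1 − p^{−2})). -/

import Mathlib

/-- The integral kernel of `D̂⁻¹`: `K(n,k,i,r) = p^{-i}` if `i ≥ n` and `r = l p^{α-n+i}`,
where `k = l p^α` with `p ∤ l`, and `0` otherwise. -/
noncomputable def hsKernel (p n k i r : ℕ) : ℝ :=
  if n ≤ i ∧ r = k / p ^ padicValNat p k * p ^ (padicValNat p k + (i - n)) then
    ((p : ℝ) ^ i)⁻¹ else 0

open ENNReal

private lemma tsum_ite_geo (n : ℕ) (x : ℝ≥0∞) :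
    ∑' i : ℕ, (if n ≤ i then x ^ i else 0) = x ^ n * (1 - x)⁻¹ := by
  have h1 : ∀ i : ℕ, (if n ≤ i then x ^ i else 0)
      = Set.indicator {i : ℕ | n ≤ i} (fun i => x ^ i) i := by
    intro i
    by_cases h : n ≤ i <;> simp [Set.indicator, h]
  rw [tsum_congr h1, ← tsum_subtype]
  rw [← Equiv.tsum_eq
    (⟨fun j => ⟨n + j, Nat.le_add_right n j⟩, fun i => i.1 - n,
      fun j => by simp, fun i => by simp [Nat.add_sub_cancel' i.2]⟩ : ℕ ≃ {i : ℕ | n ≤ i})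
    (fun s : {i : ℕ | n ≤ i} => x ^ (s : ℕ))]
  show ∑' j : ℕ, x ^ (n + j) = x ^ n * (1 - x)⁻¹
  simp only [pow_add, ENNReal.tsum_mul_left, ENNReal.tsum_geometric]

private lemma kernel_target (p n k i : ℕ) (hp : p.Prime) (hk : k < p ^ n) (hni : n ≤ i) :
    k / p ^ padicValNat p k * p ^ (padicValNat p k + (i - n)) = k * p ^ (i - n) ∧
      k * p ^ (i - n) < p ^ i := by
  constructor
  · rw [pow_add, ← mul_assoc, Nat.div_mul_cancel pow_padicValNat_dvd]
  · calc k * p ^ (i - n) < p ^ n * p ^ (i - n) :=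
          (Nat.mul_lt_mul_right (pow_pos hp.pos _)).2 hk
      _ = p ^ i := by rw [← pow_add, Nat.add_sub_cancel' hni]

/-- `D̂⁻¹` is Hilbert–Schmidt with Hilbert–Schmidt norm squared `1/((1-p⁻¹)(1-p⁻²))`. -/
theorem stmt10 (p : ℕ) (hp : p.Prime) :
    ∑' x : Σ n : ℕ, Fin (p ^ n) × Σ i : ℕ, Fin (p ^ i),
        hsKernel p x.1 (x.2.1 : ℕ) x.2.2.1 (x.2.2.2 : ℕ) ^ 2
      = ((1 - (p : ℝ)⁻¹) * (1 - (p : ℝ)⁻¹ ^ 2))⁻¹ := by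
  have hp2 : (2 : ℝ) ≤ (p : ℝ) := by exact_mod_cast hp.two_le
  have hppos : (0 : ℝ) < (p : ℝ) := by linarith
  set f : (Σ n : ℕ, Fin (p ^ n) × Σ i : ℕ, Fin (p ^ i)) → ℝ :=
    fun x => hsKernel p x.1 (x.2.1 : ℕ) x.2.2.1 (x.2.2.2 : ℕ) ^ 2 with hf
  have hf0 : ∀ x, 0 ≤ f x := fun x => sq_nonneg _
  set q : ℝ≥0∞ := ((p : ℝ≥0∞))⁻¹ with hq
  have hpne0 : (p : ℝ≥0∞) ≠ 0 := by exact_mod_cast hp.pos.ne'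
  have hpnetop : (p : ℝ≥0∞) ≠ ∞ := natCast_ne_top p
  -- inner sum over r
  have inner : ∀ (n i : ℕ) (k : Fin (p ^ n)),
      ∑' r : Fin (p ^ i), ENNReal.ofReal (f ⟨n, k, i, r⟩)
        = if n ≤ i then (q ^ 2) ^ i else 0 := by
    intro n i k
    by_cases hni : n ≤ i
    · obtain ⟨hc, hlt⟩ := kernel_target p n (k : ℕ) i hp k.2 hni
      rw [tsum_fintype]
      have hterm : ∀ r : Fin (p ^ i),
          ENNReal.ofReal (f ⟨n, k, i, r⟩)
            = if r = (⟨(k : ℕ) * p ^ (i - n), hlt⟩ : Fin (p ^ i)) then (q ^ 2) ^ i else 0 := by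
        intro r
        simp only [hf, hsKernel, hc]
        by_cases hr : (r : ℕ) = (k : ℕ) * p ^ (i - n)
        · rw [if_pos ⟨hni, hr⟩, if_pos (Fin.ext hr)]
          rw [ENNReal.ofReal_pow (by positivity), ENNReal.ofReal_inv_of_pos (by positivity),
            ENNReal.ofReal_pow (by positivity), ENNReal.ofReal_natCast]
          rw [hq, ENNReal.inv_pow, ← pow_mul, Nat.mul_comm i 2, ← pow_mul]
        · rw [if_neg (by rintro ⟨_, h⟩; exact hr h), if_neg (fun h => hr (by rw [h]))]
          simp
      rw [Finset.sum_congr rfl (fun r _ => hterm r), Finset.sum_ite_eq' Finset.univ]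
      simp [hni]
    · rw [if_neg hni]
      refine ENNReal.tsum_eq_zero.2 fun r => ?_
      simp only [hf, hsKernel]
      rw [if_neg (by rintro ⟨h, _⟩; exact hni h)]
      simp
  -- total sum in ℝ≥0∞
  have hE : ∑' x : Σ n : ℕ, Fin (p ^ n) × Σ i : ℕ, Fin (p ^ i), ENNReal.ofReal (f x)
      = (1 - q ^ 2)⁻¹ * (1 - q)⁻¹ := by
    rw [ENNReal.tsum_sigma']
    have step1 : ∀ n : ℕ,
        (∑' y : Fin (p ^ n) × Σ i : ℕ, Fin (p ^ i), ENNReal.ofReal (f ⟨n, y⟩))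
          = (p : ℝ≥0∞) ^ n * ((q ^ 2) ^ n * (1 - q ^ 2)⁻¹) := by
      intro n
      rw [ENNReal.tsum_prod']
      have step2 : ∀ k : Fin (p ^ n),
          (∑' z : Σ i : ℕ, Fin (p ^ i), ENNReal.ofReal (f ⟨n, k, z⟩))
            = (q ^ 2) ^ n * (1 - q ^ 2)⁻¹ := by
        intro k
        rw [ENNReal.tsum_sigma']
        calc (∑' (i : ℕ) (r : Fin (p ^ i)), ENNReal.ofReal (f ⟨n, k, i, r⟩))
            = ∑' i : ℕ, if n ≤ i then (q ^ 2) ^ i else 0 := tsum_congr (fun i => inner n i k)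
          _ = (q ^ 2) ^ n * (1 - q ^ 2)⁻¹ := tsum_ite_geo n (q ^ 2)
      rw [tsum_congr step2, tsum_fintype]
      simp [Finset.sum_const, Fintype.card_fin, nsmul_eq_mul]
    rw [tsum_congr step1]
    have : ∀ n : ℕ, (p : ℝ≥0∞) ^ n * ((q ^ 2) ^ n * (1 - q ^ 2)⁻¹)
        = (1 - q ^ 2)⁻¹ * q ^ n := by
      intro n
      rw [← mul_assoc, ← mul_pow, hq, sq, ← mul_assoc,
        ENNReal.mul_inv_cancel hpne0 hpnetop, one_mul, mul_comm]
    rw [tsum_congr this, ENNReal.tsum_mul_left, ENNReal.tsum_geometric]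
  -- convert back to ℝ
  have key : ∑' x, f x = ((1 - q ^ 2)⁻¹ * (1 - q)⁻¹).toReal := by
    rw [← hE, ENNReal.tsum_toReal_eq (fun a => ofReal_ne_top)]
    exact tsum_congr fun a => (ENNReal.toReal_ofReal (hf0 a)).symm
  rw [hf] at key
  rw [key]
  have hq1 : q ≤ 1 := by
    rw [hq]
    exact ENNReal.inv_le_one.2 (by exact_mod_cast hp.one_le)
  have hq2 : q ^ 2 ≤ 1 := pow_le_one₀ zero_le hq1
  have hqr : q.toReal = (p : ℝ)⁻¹ := by
    rw [hq, ENNReal.toReal_inv]; simp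
  rw [ENNReal.toReal_mul, ENNReal.toReal_inv, ENNReal.toReal_inv,
    ENNReal.toReal_sub_of_le hq2 one_ne_top, ENNReal.toReal_sub_of_le hq1 one_ne_top,
    ENNReal.toReal_pow, hqr]
  rw [ENNReal.toReal_one, ← mul_inv, mul_comm]
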